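/- Let Z and W be Hermitian matrices on a bipartite finite-dimensional space H_S ⊗ H_0 with −υW ⪯ Z ⪯ υW (so in particular W ⪰ 0), for υ ≥ 0. Then ‖Tr_{H_S}(Z)‖₁ ≤ υ·Tr(W), i.e., the trace norm of the partial trace of Z is bounded by υ times the trace of W. -/

import Mathlib

open Matrix
open scoped Kronecker ComplexOrder

/-- Trace norm (Schatten 1-norm) of a complex matrix: `Tr √(AᴴA)`. -/
noncomputable def traceNorm {n : Type*} [Fintype n] [DecidableEq n]
    (A : Matrix n n ℂ) : ℝ :=
  (((Matrix.posSemidef_conjTranspose_mul_self A).1.eigenvectorUnitary.1 *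
    diagonal (((↑) : ℝ → ℂ) ∘ (√·) ∘ (Matrix.posSemidef_conjTranspose_mul_self A).1.eigenvalues) *
    (star (Matrix.posSemidef_conjTranspose_mul_self A).1.eigenvectorUnitary : Matrix n n ℂ)).trace).re

/-- Von Neumann entropy (natural log) of a matrix, via eigenvalues when Hermitian. -/
noncomputable def vNEntropy {n : Type*} [Fintype n] [DecidableEq n]
    (ρ : Matrix n n ℂ) : ℝ := by
  classical exact
    if h : ρ.IsHermitian then ∑ i, Real.negMulLog (h.eigenvalues i) else 0

/-- The partial trace over the first tensor factor. -/
noncomputable def ptraceS {s o : Type*} [Fintype s]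
    (M : Matrix (s × o) (s × o) ℂ) : Matrix o o ℂ :=
  Matrix.of fun i j => ∑ a : s, M (a, i) (a, j)

/-- The unitary conjugation channel `ρ ↦ U ρ Uᴴ` as a linear endomorphism. -/
noncomputable def uch {n : Type*} [Fintype n] [DecidableEq n]
    (U : Matrix n n ℂ) : Matrix n n ℂ →ₗ[ℂ] Matrix n n ℂ where
  toFun := fun ρ => U * ρ * Uᴴ
  map_add' := fun ρ σ => by simp [Matrix.add_mul, Matrix.mul_add]
  map_smul' := fun c ρ => by simp [Matrix.mul_smul, Matrix.smul_mul]

/-- Extension `Φ ⊗ id` of a map on matrices to a bipartite system (function form). -/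
noncomputable def tensorExt {n r : Type*}
    (Φ : Matrix n n ℂ →ₗ[ℂ] Matrix n n ℂ)
    (M : Matrix (n × r) (n × r) ℂ) : Matrix (n × r) (n × r) ℂ :=
  Matrix.of fun p q => Φ (Matrix.of fun a b => M (a, p.2) (b, q.2)) p.1 q.1

/-- Diamond norm: supremum of trace norm of `(Φ ⊗ id)` over bipartite states,
with reference system of the same dimension. -/
noncomputable def diamondNorm {n : Type*} [Fintype n] [DecidableEq n]
    (Φ : Matrix n n ℂ →ₗ[ℂ] Matrix n n ℂ) : ℝ :=
  ⨆ M : {M : Matrix (n × n) (n × n) ℂ // M.PosSemidef ∧ M.trace = 1},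
    traceNorm (tensorExt Φ M.1)

/-- Trace-preserving map on matrices. -/
def IsTracePreserving {n : Type*} [Fintype n]
    (Φ : Matrix n n ℂ →ₗ[ℂ] Matrix n n ℂ) : Prop :=
  ∀ X, (Φ X).trace = X.trace

/-- Complete positivity (via the extension to an equal-size reference system). -/
def IsCompletelyPositive {n : Type*} [Fintype n] [DecidableEq n]
    (Φ : Matrix n n ℂ →ₗ[ℂ] Matrix n n ℂ) : Prop :=
  ∀ M : Matrix (n × n) (n × n) ℂ, M.PosSemidef → (tensorExt Φ M).PosSemidef

/-- Operator (spectral) norm of a complex matrix. -/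
noncomputable def opNorm {n : Type*} [Fintype n] [DecidableEq n]
    (A : Matrix n n ℂ) : ℝ :=
  ‖Matrix.toEuclideanCLM (𝕜 := ℂ) A‖

lemma ptraceS_posSemidef {s o : Type*} [Fintype s] [Fintype o]
    {M : Matrix (s × o) (s × o) ℂ} (hM : M.PosSemidef) :
    (ptraceS M).PosSemidef := by
  classical
  refine posSemidef_iff_dotProduct_mulVec.mpr ⟨?_, ?_⟩
  · ext i j
    simp only [ptraceS, conjTranspose_apply, of_apply, star_sum]
    refine Finset.sum_congr rfl fun a _ => ?_
    exact congrFun (congrFun hM.1 (a, i)) (a, j)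
  · intro x
    have key : ∀ a : s,
        0 ≤ star (fun p : s × o => if p.1 = a then x p.2 else 0) ⬝ᵥ
          (M *ᵥ fun p : s × o => if p.1 = a then x p.2 else 0) := fun a => hM.dotProduct_mulVec_nonneg _
    have heq : star x ⬝ᵥ (ptraceS M *ᵥ x) =
        ∑ a : s, star (fun p : s × o => if p.1 = a then x p.2 else 0) ⬝ᵥ
          (M *ᵥ fun p : s × o => if p.1 = a then x p.2 else 0) := by
      have hrhs : ∀ a : s,
          star (fun p : s × o => if p.1 = a then x p.2 else 0) ⬝ᵥ
            (M *ᵥ fun p : s × o => if p.1 = a then x p.2 else 0)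
          = ∑ i, ∑ j, star (x i) * (M (a, i) (a, j) * x j) := by
        intro a
        simp [dotProduct, mulVec, Fintype.sum_prod_type, apply_ite (star : ℂ → ℂ),
          mul_ite, mul_zero, ite_mul, zero_mul, Finset.mul_sum]
      simp only [hrhs]
      simp only [dotProduct, mulVec, ptraceS, of_apply, Pi.star_apply,
        Finset.sum_mul, Finset.mul_sum]
      exact (Finset.sum_congr rfl fun i _ => Finset.sum_comm).trans Finset.sum_comm
    rw [heq]
    exact Finset.sum_nonneg fun a _ => key a

lemma traceNorm_le_of_sandwich {n : Type*} [Fintype n] [DecidableEq n]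
    (M B : Matrix n n ℂ) (hM : M.IsHermitian)
    (h1 : (B - M).PosSemidef) (h2 : (B + M).PosSemidef) :
    traceNorm M ≤ B.trace.re := by
  classical
  set U : Matrix n n ℂ := (hM.eigenvectorUnitary : Matrix n n ℂ) with hUdef
  have hUU : star U * U = 1 := Unitary.coe_star_mul_self hM.eigenvectorUnitary
  have hUU' : U * star U = 1 := Unitary.coe_mul_star_self hM.eigenvectorUnitary
  set lam := hM.eigenvalues with hlam
  set S : Matrix n n ℂ := U * diagonal (fun i => (RCLike.ofReal |lam i| : ℂ)) * star U with hSdef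
  have hSpsd : S.PosSemidef := by
    rw [hSdef, Matrix.star_eq_conjTranspose U]
    exact Matrix.PosSemidef.mul_mul_conjTranspose_same
      (Matrix.PosSemidef.diagonal fun i => RCLike.ofReal_nonneg.mpr (abs_nonneg _)) U
  have hMM : Mᴴ * M = M * M := by rw [hM.eq]
  have hdd : ∀ (d : n → ℂ), (U * diagonal d * star U) * (U * diagonal d * star U)
      = U * (diagonal d * diagonal d) * star U := by
    intro d
    rw [Matrix.mul_assoc (U * diagonal d) (star U), ← Matrix.mul_assoc (star U) (U * diagonal d),
      ← Matrix.mul_assoc (star U) U, hUU, Matrix.one_mul]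
    simp only [Matrix.mul_assoc]
  have hS2 : S ^ 2 = Mᴴ * M := by
    rw [hMM, pow_two, hSdef]
    nth_rewrite 2 [hM.spectral_theorem]
    nth_rewrite 1 [hM.spectral_theorem]
    simp only [Unitary.conjStarAlgAut_apply, Unitary.coe_star]
    rw [← hUdef]
    rw [hdd, hdd, diagonal_mul_diagonal, diagonal_mul_diagonal]
    have hfun : (fun i => (RCLike.ofReal |lam i| : ℂ) * RCLike.ofReal |lam i|)
        = fun i => (RCLike.ofReal (lam i) : ℂ) * RCLike.ofReal (lam i) := by
      funext i
      rw [← RCLike.ofReal_mul, ← RCLike.ofReal_mul, abs_mul_abs_self]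
    rw [hfun]
    rfl
  have hsqrt : S = ((Matrix.posSemidef_conjTranspose_mul_self M).1.eigenvectorUnitary.1 *
      diagonal (((↑) : ℝ → ℂ) ∘ (√·) ∘ (Matrix.posSemidef_conjTranspose_mul_self M).1.eigenvalues) *
      (star (Matrix.posSemidef_conjTranspose_mul_self M).1.eigenvectorUnitary : Matrix n n ℂ)) := by
    have hsa : IsSelfAdjoint M := hM
    change S = (Matrix.posSemidef_conjTranspose_mul_self M).1.cfc Real.sqrt
    rw [← IsHermitian.cfc_eq, hMM, ← pow_two, ← cfc_comp_pow Real.sqrt 2 M]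
    simp only [Function.comp_def, Real.sqrt_sq_eq_abs]
    rw [hM.cfc_eq]
    rfl
  have htrS : S.trace = ∑ i, (RCLike.ofReal |lam i| : ℂ) := by
    rw [hSdef, Matrix.trace_mul_cycle, hUU, Matrix.one_mul, Matrix.trace_diagonal]
  set X : Matrix n n ℂ := star U * B * U with hXdef
  have hXM : star U * M * U = diagonal (RCLike.ofReal ∘ lam) :=
    by simpa [Unitary.conjStarAlgAut_apply] using hM.conjStarAlgAut_star_eigenvectorUnitary
  have hXe1 : Uᴴ * (B - M) * U = X - diagonal (RCLike.ofReal ∘ lam) := by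
    rw [← Matrix.star_eq_conjTranspose, Matrix.mul_sub, Matrix.sub_mul, hXM, hXdef]
  have hXe2 : Uᴴ * (B + M) * U = X + diagonal (RCLike.ofReal ∘ lam) := by
    rw [← Matrix.star_eq_conjTranspose, Matrix.mul_add, Matrix.add_mul, hXM, hXdef]
  have hd1 : ∀ i, 0 ≤ (X i i - (lam i : ℂ)) := by
    intro i
    have h := (h1.conjTranspose_mul_mul_same U).dotProduct_mulVec_nonneg (Pi.single i 1)
    rw [hXe1] at h
    simpa [dotProduct, mulVec, Pi.single_apply, Matrix.sub_apply, mul_ite, ite_mul,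
      Finset.sum_ite_eq, Finset.sum_ite_eq'] using h
  have hd2 : ∀ i, 0 ≤ (X i i + (lam i : ℂ)) := by
    intro i
    have h := (h2.conjTranspose_mul_mul_same U).dotProduct_mulVec_nonneg (Pi.single i 1)
    rw [hXe2] at h
    simpa [dotProduct, mulVec, Pi.single_apply, Matrix.add_apply, mul_ite, ite_mul,
      Finset.sum_ite_eq, Finset.sum_ite_eq'] using h
  have habs : ∀ i, |lam i| ≤ (X i i).re := by
    intro i
    have h1' := (Complex.nonneg_iff.mp (hd1 i)).1
    have h2' := (Complex.nonneg_iff.mp (hd2 i)).1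
    simp only [Complex.sub_re, Complex.add_re, Complex.ofReal_re, Complex.zero_re] at h1' h2'
    refine abs_le.mpr ⟨by linarith, by linarith⟩
  have htrX : X.trace = B.trace := by
    rw [hXdef, Matrix.trace_mul_cycle, hUU', Matrix.one_mul]
  calc traceNorm M = ∑ i, |lam i| := by
        rw [traceNorm, ← hsqrt, htrS, Complex.re_sum]
        simp
    _ ≤ ∑ i, (X i i).re := Finset.sum_le_sum fun i _ => habs i
    _ = X.trace.re := by rw [Matrix.trace, Complex.re_sum]; rfl
    _ = B.trace.re := by rw [htrX]

/-- If Hermitian `Z, W` on a bipartite space satisfy `−υW ⪯ Z ⪯ υW` (so `W ⪰ 0`),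
then `‖Tr_S(Z)‖₁ ≤ υ·Tr(W)`. -/
theorem traceNorm_ptrace_le_of_loewner_sandwich {s o : Type*}
    [Fintype s] [DecidableEq s] [Fintype o] [DecidableEq o]
    (Z W : Matrix (s × o) (s × o) ℂ)
    (hZ : Z.IsHermitian) (hW : W.IsHermitian)
    (υ : ℝ) (hυ : 0 ≤ υ)
    (h₁ : (υ • W - Z).PosSemidef) (h₂ : (υ • W + Z).PosSemidef) :
    traceNorm (ptraceS Z) ≤ υ * W.trace.re := by
  classical
  have hlin_sub : ptraceS (υ • W) - ptraceS Z = ptraceS (υ • W - Z) := by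
    ext i j
    simp [ptraceS, Finset.sum_sub_distrib]
  have hlin_add : ptraceS (υ • W) + ptraceS Z = ptraceS (υ • W + Z) := by
    ext i j
    simp [ptraceS, Finset.sum_add_distrib]
  have hMher : (ptraceS Z).IsHermitian := by
    ext i j
    simp only [ptraceS, conjTranspose_apply, of_apply, star_sum]
    exact Finset.sum_congr rfl fun a _ => congrFun (congrFun hZ (a, i)) (a, j)
  have hb := traceNorm_le_of_sandwich (ptraceS Z) (ptraceS (υ • W)) hMher
    (by rw [hlin_sub]; exact ptraceS_posSemidef h₁)
    (by rw [hlin_add]; exact ptraceS_posSemidef h₂)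
  refine hb.trans_eq ?_
  have htr : (ptraceS (υ • W)).trace = (υ • W).trace := by
    rw [Matrix.trace, Matrix.trace]
    simp only [Matrix.diag, ptraceS, of_apply, Fintype.sum_prod_type]
    exact Finset.sum_comm
  rw [htr, Matrix.trace_smul, Complex.smul_re]
  rfl
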